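/- Let A₁, A₂, A₃ be real numbers and let D(F) := 18A₁A₂A₃ + (A₁A₂)² − 4A₃A₁³ − 4A₂³ − 27A₃². If D(F) < 0, A₁ > 0, A₂ > 0, A₁A₂ = A₃, and 0 < m < 1, then every complex root ξ of the cubic F(ξ) = ξ³ + A₁ξ² + A₂ξ + A₃ satisfies |arg(ξ)| > mπ/2. -/
import Mathlib


/-- Matignon stability criterion, case (iv): if `D(F) < 0`, `A₁ > 0`, `A₂ > 0`, `A₁A₂ = A₃`
and `0 < m < 1`, then every complex root `ξ` of `F(ξ) = ξ³ + A₁ξ² + A₂ξ + A₃` satisfies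
`|arg ξ| > mπ/2`. -/
theorem matignon_stable_case_iv
    (A₁ A₂ A₃ m : ℝ)
    (hD : 18 * A₁ * A₂ * A₃ + (A₁ * A₂) ^ 2 - 4 * A₃ * A₁ ^ 3 - 4 * A₂ ^ 3 - 27 * A₃ ^ 2 < 0)
    (h1 : 0 < A₁) (h2 : 0 < A₂) (h12 : A₁ * A₂ = A₃)
    (hm0 : 0 < m) (hm : m < 1) :
    ∀ ξ : ℂ, ξ ^ 3 + (A₁ : ℂ) * ξ ^ 2 + (A₂ : ℂ) * ξ + (A₃ : ℂ) = 0 →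
      m * Real.pi / 2 < |ξ.arg| := by
  intro ξ hroot
  -- factor the cubic
  have hfac : (ξ + (A₁ : ℂ)) * (ξ ^ 2 + (A₂ : ℂ)) = 0 := by
    rw [← hroot, ← h12]; push_cast; ring
  -- in both cases, re ξ ≤ 0 and ξ ≠ 0
  have key : ξ.re ≤ 0 ∧ ξ ≠ 0 := by
    rcases mul_eq_zero.mp hfac with h | h
    · have hxi : ξ = -(A₁ : ℂ) := by linear_combination h
      constructor
      · rw [hxi]; simp; linarith
      · rw [hxi]
        simp only [ne_eq, neg_eq_zero, Complex.ofReal_eq_zero]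
        exact ne_of_gt h1
    · have hsq : ξ ^ 2 = -(A₂ : ℂ) := by linear_combination h
      have hre : ξ.re ^ 2 - ξ.im ^ 2 = -A₂ := by
        have := congrArg Complex.re hsq
        simpa [pow_two, Complex.mul_re, sq] using this
      have him : ξ.re * ξ.im = 0 := by
        have h' := congrArg Complex.im hsq
        simp [pow_two, Complex.mul_im] at h'
        linarith
      have hre0 : ξ.re = 0 := by
        rcases mul_eq_zero.mp him with h' | h'
        · exact h'
        · exfalso; nlinarith [sq_nonneg ξ.re]
      refine ⟨le_of_eq hre0, ?_⟩
      intro h0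
      rw [h0] at hsq
      simp at hsq
      nlinarith
  obtain ⟨hre, hne⟩ := key
  have hpi : Real.pi / 2 ≤ |ξ.arg| := by
    by_contra hlt
    push_neg at hlt
    rcases Complex.abs_arg_lt_pi_div_two_iff.mp hlt with h | h
    · linarith
    · exact hne h
  have : m * Real.pi / 2 < Real.pi / 2 := by
    have := Real.pi_pos; nlinarith
  linarith
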